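/- Let G be a finite connected simple graph and let A_x, A_y be spanning trees of G with |A_x \ A_y| = 1; let e_x be the unique edge of A_x \ A_y and e_y the unique edge of A_y \ A_x. Let i be an edge of G with i ∉ A_x and i ∉ A_y, let C_x be the unique cycle contained in A_x ∪ {i}, let C_y be the unique cycle contained in A_y ∪ {i}, and let C_e be the unique cycle contained in A_x ∪ {e_y}. Then either C_x = C_y, or all of the following hold: e_x ∈ C_x \ C_y, e_y ∈ C_y \ C_x, i ∈ C_x ∩ C_y, and (C_x \ C_y) ∪ (C_y \ C_x) = C_e; in the latter case the disjoint sets E_x = C_x \ (C_x ∩ C_y) and E_y = C_y \ (C_x ∩ C_y) partition C_e, and in particular e_x ∈ C_e. -/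

import Mathlib

open SimpleGraph

/-- `A` is (the edge set of) a spanning tree of `G`: a set of edges of `G` whose
spanning subgraph is connected and acyclic. -/
def IsSpanningTree {V : Type*} (G : SimpleGraph V) (A : Set (Sym2 V)) : Prop :=
  A ⊆ G.edgeSet ∧ (SimpleGraph.fromEdgeSet A).Connected ∧ (SimpleGraph.fromEdgeSet A).IsAcyclic

/-- `C` is the edge set of a cycle of the graph `H`. -/
def IsCycleSet {V : Type*} (H : SimpleGraph V) (C : Set (Sym2 V)) : Prop :=
  ∃ (v : V) (w : H.Walk v v), w.IsCycle ∧ C = {e | e ∈ w.edges}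

section Aux

variable {V : Type*}

lemma aux_ncard_mem_list {α : Type*} {l : List α} (hl : l.Nodup) (P : α → Prop)
    [DecidablePred P] :
    {a | a ∈ l ∧ P a}.ncard = l.countP (fun a => decide (P a)) := by
  classical
  have : {a | a ∈ l ∧ P a} = ↑((l.filter (fun a => decide (P a))).toFinset) := by
    ext a; simp [List.mem_filter]
  rw [this, Set.ncard_coe_finset, List.toFinset_card_of_nodup (hl.filter _),
    List.countP_eq_length_filter]

lemma aux_cycle_even_deg {H : SimpleGraph V} {u : V} {w : H.Walk u u}
    (hw : w.IsCycle) (x : V) : Even ({e | e ∈ w.edges ∧ x ∈ e}.ncard) := by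
  classical
  rw [aux_ncard_mem_list hw.edges_nodup]
  have := hw.isTrail.even_countP_edges_iff x
  simp only [ne_eq, not_true_eq_false, false_implies, iff_true] at this
  convert this using 2

lemma aux_even_symmdiff {α : Type*} {A B : Set α} (hA : A.Finite) (hB : B.Finite)
    (h1 : Even A.ncard) (h2 : Even B.ncard) : Even ((A \ B) ∪ (B \ A)).ncard := by
  have e1 : (A \ B).ncard + (A ∩ B).ncard = A.ncard := by
    rw [← Set.ncard_union_eq (Disjoint.mono_right Set.inter_subset_right
      Set.disjoint_sdiff_left) hA.diff (hA.inter_of_left _), Set.diff_union_inter]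
  have e2 : (B \ A).ncard + (A ∩ B).ncard = B.ncard := by
    rw [Set.inter_comm, ← Set.ncard_union_eq (Disjoint.mono_right Set.inter_subset_right
      Set.disjoint_sdiff_left) hB.diff (hB.inter_of_left _), Set.diff_union_inter]
  have e3 : ((A \ B) ∪ (B \ A)).ncard = (A \ B).ncard + (B \ A).ncard :=
    Set.ncard_union_eq disjoint_sdiff_sdiff hA.diff hB.diff
  rw [Nat.even_iff] at h1 h2 ⊢
  omega

lemma aux_even_deg_symmdiff [Fintype V] {A B : Set (Sym2 V)}
    (hA : ∀ x : V, Even {e | e ∈ A ∧ x ∈ e}.ncard)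
    (hB : ∀ x : V, Even {e | e ∈ B ∧ x ∈ e}.ncard) (x : V) :
    Even {e | e ∈ (A \ B) ∪ (B \ A) ∧ x ∈ e}.ncard := by
  have hset : {e | e ∈ (A \ B) ∪ (B \ A) ∧ x ∈ e} =
      ({e | e ∈ A ∧ x ∈ e} \ {e | e ∈ B ∧ x ∈ e}) ∪
      ({e | e ∈ B ∧ x ∈ e} \ {e | e ∈ A ∧ x ∈ e}) := by
    ext e
    simp only [Set.mem_setOf_eq, Set.mem_union, Set.mem_diff, Set.mem_setOf_eq]
    tauto
  rw [hset]
  exact aux_even_symmdiff (Set.toFinite _) (Set.toFinite _) (hA x) (hB x)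

lemma aux_even_subset_acyclic_empty [Fintype V] {F S : Set (Sym2 V)}
    (hF : (fromEdgeSet F).IsAcyclic) (hSF : S ⊆ F) (hS : ∀ e ∈ S, ¬ e.IsDiag)
    (heven : ∀ x : V, Even ({e | e ∈ S ∧ x ∈ e}.ncard)) : S = ∅ := by
  classical
  by_contra hne
  obtain ⟨e0, he0⟩ := Set.nonempty_iff_ne_empty.2 hne
  have hadj : ∀ {a b : V}, s(a,b) ∈ S → a ≠ b → (fromEdgeSet S).Adj a b := by
    intro a b h hab; rw [fromEdgeSet_adj]; exact ⟨h, hab⟩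
  set P : Set ℕ := {n | ∃ (u v : V) (p : (fromEdgeSet S).Walk u v), p.IsPath ∧ p.length = n}
    with hPdef
  have hbdd : BddAbove P := by
    refine ⟨Fintype.card V, ?_⟩
    rintro n ⟨u, v, p, hp, rfl⟩
    exact le_of_lt hp.length_lt
  have h1P : 1 ∈ P := by
    induction e0 with
    | h a b =>
      have hab : a ≠ b := fun h => hS _ he0 (by simp [h])
      refine ⟨a, b, Walk.cons (hadj he0 hab) Walk.nil, ?_, rfl⟩
      simp [Walk.cons_isPath_iff, hab]
  have hPne : P.Nonempty := ⟨1, h1P⟩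
  have hmem := Nat.sSup_mem hPne hbdd
  obtain ⟨u, v, p, hp, hlen⟩ := hmem
  have hlen1 : 1 ≤ p.length := hlen ▸ le_csSup hbdd h1P
  cases p with
  | nil => simp at hlen1
  | cons h q =>
    rename_i w
    rw [Walk.cons_isPath_iff] at hp
    obtain ⟨hq, hu⟩ := hp
    have he0' : s(u, w) ∈ S := ((fromEdgeSet_adj S).1 h).1
    have huw : u ≠ w := ((fromEdgeSet_adj S).1 h).2
    have hI : s(u,w) ∈ {e | e ∈ S ∧ u ∈ e} := ⟨he0', by simp⟩
    have hex1 : ∃ e1 ∈ {e | e ∈ S ∧ u ∈ e}, e1 ≠ s(u,w) := by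
      by_contra hcon
      push_neg at hcon
      have hsing : {e | e ∈ S ∧ u ∈ e} = {s(u,w)} :=
        Set.eq_singleton_iff_unique_mem.2 ⟨hI, hcon⟩
      have hev := heven u
      rw [hsing, Set.ncard_singleton] at hev
      exact (Nat.not_even_one) hev
    obtain ⟨e1, ⟨he1S, hue1⟩, hne1⟩ := hex1
    obtain ⟨w', rfl⟩ : ∃ w', e1 = s(u, w') := ⟨Sym2.Mem.other hue1, (Sym2.other_spec hue1).symm⟩
    have huw' : u ≠ w' := fun hh => hS _ he1S (by simp [← hh])
    have hadj1 : (fromEdgeSet S).Adj u w' := hadj he1S huw'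
    by_cases hws : w' ∈ (Walk.cons h q).support
    · -- there is a cycle in `S`, contradiction
      have hw'q : w' ∈ q.support := by
        have := Walk.support_cons h q ▸ hws
        rcases List.mem_cons.1 this with hc | hc
        · exact absurd hc.symm huw'
        · exact hc
      set q0 := q.takeUntil w' hw'q with hq0def
      have hq0 : q0.IsPath := hq.takeUntil hw'q
      have hu0 : u ∉ q0.support := fun hc => hu (Walk.support_takeUntil_subset _ hw'q hc)
      have hinner : (Walk.cons h q0).IsPath := by
        rw [Walk.cons_isPath_iff]; exact ⟨hq0, hu0⟩
      have hnotedge : s(w', u) ∉ (Walk.cons h q0).edges := by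
        simp only [Walk.edges_cons, List.mem_cons]
        rintro (hc | hc)
        · rw [Sym2.eq_iff] at hc
          rcases hc with ⟨h1, h2⟩ | ⟨h1, h2⟩
          · exact huw' h1.symm
          · exact hne1 (by rw [h1])
        · exact hu0 (Walk.snd_mem_support_of_mem_edges q0 hc)
      have hcyc : (Walk.cons hadj1.symm (Walk.cons h q0)).IsCycle :=
        (Walk.cons_isCycle_iff _ hadj1.symm).2 ⟨hinner, hnotedge⟩
      have hedges : ∀ e ∈ (Walk.cons hadj1.symm (Walk.cons h q0)).edges,
          e ∈ (fromEdgeSet F).edgeSet := by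
        intro e he
        have := Walk.edges_subset_edgeSet _ he
        rw [edgeSet_fromEdgeSet] at this ⊢
        exact ⟨hSF this.1, this.2⟩
      exact hF _ (hcyc.transfer hedges)
    · -- a longer path, contradiction with maximality
      have hmax : (Walk.cons h q).length + 1 ∈ P := by
        refine ⟨w', v, Walk.cons hadj1.symm (Walk.cons h q), ?_, rfl⟩
        rw [Walk.cons_isPath_iff, Walk.cons_isPath_iff]
        exact ⟨⟨hq, hu⟩, hws⟩
      have := le_csSup hbdd hmax
      omega

/-- basic properties of a cycle edge set -/
lemma aux_isCycleSet_props {H : SimpleGraph V} {C : Set (Sym2 V)} (h : IsCycleSet H C) :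
    C.Nonempty ∧ (∀ e ∈ C, ¬ e.IsDiag) ∧ (∀ x : V, Even {e | e ∈ C ∧ x ∈ e}.ncard) ∧
      C ⊆ H.edgeSet := by
  obtain ⟨v, w, hw, rfl⟩ := h
  refine ⟨?_, ?_, ?_, ?_⟩
  · have h3 := hw.three_le_length
    have : w.edges ≠ [] := by
      intro hnil
      have := w.length_edges
      rw [hnil] at this
      simp at this
      omega
    obtain ⟨e, he⟩ := List.exists_mem_of_ne_nil _ this
    exact ⟨e, he⟩
  · intro e he
    exact H.not_isDiag_of_mem_edgeSet (Walk.edges_subset_edgeSet _ he)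
  · exact aux_cycle_even_deg hw
  · intro e he
    exact Walk.edges_subset_edgeSet _ he

/-- uniqueness of the cycle inside "tree plus one edge" -/
lemma aux_cycle_unique [Fintype V] {A : Set (Sym2 V)} {j : Sym2 V}
    (hA : (fromEdgeSet A).IsAcyclic) {C1 C2 : Set (Sym2 V)}
    (h1ne : C1.Nonempty) (h1d : ∀ e ∈ C1, ¬ e.IsDiag)
    (h1ev : ∀ x : V, Even {e | e ∈ C1 ∧ x ∈ e}.ncard) (h1s : C1 ⊆ A ∪ {j})
    (h2ne : C2.Nonempty) (h2d : ∀ e ∈ C2, ¬ e.IsDiag)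
    (h2ev : ∀ x : V, Even {e | e ∈ C2 ∧ x ∈ e}.ncard) (h2s : C2 ⊆ A ∪ {j}) :
    C1 = C2 := by
  have hj : ∀ {C : Set (Sym2 V)}, C.Nonempty → (∀ e ∈ C, ¬ e.IsDiag) →
      (∀ x : V, Even {e | e ∈ C ∧ x ∈ e}.ncard) → C ⊆ A ∪ {j} → j ∈ C := by
    intro C hne hd hev hs
    by_contra hjC
    have hCA : C ⊆ A := by
      intro e he
      rcases hs he with h' | h'
      · exact h'
      · exact absurd he (Set.mem_singleton_iff.1 h' ▸ hjC)
    exact hne.ne_empty (aux_even_subset_acyclic_empty hA hCA hd hev)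
  have hj1 : j ∈ C1 := hj h1ne h1d h1ev h1s
  have hj2 : j ∈ C2 := hj h2ne h2d h2ev h2s
  have hsub : (C1 \ C2) ∪ (C2 \ C1) ⊆ A := by
    rintro e (⟨he1, he2⟩ | ⟨he2, he1⟩)
    · rcases h1s he1 with h' | h'
      · exact h'
      · exact absurd (Set.mem_singleton_iff.1 h' ▸ hj2) he2
    · rcases h2s he2 with h' | h'
      · exact h'
      · exact absurd (Set.mem_singleton_iff.1 h' ▸ hj1) he1
  have hdiag : ∀ e ∈ (C1 \ C2) ∪ (C2 \ C1), ¬ e.IsDiag := by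
    rintro e (⟨he, -⟩ | ⟨he, -⟩)
    · exact h1d e he
    · exact h2d e he
  have hD := aux_even_subset_acyclic_empty hA hsub hdiag (aux_even_deg_symmdiff h1ev h2ev)
  rw [Set.union_empty_iff] at hD
  exact Set.Subset.antisymm (fun e he => by
      by_contra hc; exact absurd (Set.mem_diff_of_mem he hc) (hD.1 ▸ Set.notMem_empty e))
    (fun e he => by
      by_contra hc; exact absurd (Set.mem_diff_of_mem he hc) (hD.2 ▸ Set.notMem_empty e))

end Aux

/-- Structure of the fundamental cycles `C_x`, `C_y` of two spanning trees at
edge distance 1 with respect to a common inserted edge `i`: either the two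
cycles coincide, or `e_x ∈ C_x \ C_y`, `e_y ∈ C_y \ C_x`, `i ∈ C_x ∩ C_y`, and
the exclusive parts `E_x = C_x \ (C_x ∩ C_y)` and `E_y = C_y \ (C_x ∩ C_y)`
partition the cycle `C_e` of `A_x ∪ {e_y}`; in particular `e_x ∈ C_e`. -/
theorem fundamental_cycles_partition {V : Type*} [Fintype V]
    (G : SimpleGraph V) (hG : G.Connected)
    (Ax Ay : Set (Sym2 V)) (hAx : IsSpanningTree G Ax) (hAy : IsSpanningTree G Ay)
    (ex ey : Sym2 V) (hex : Ax \ Ay = {ex}) (hey : Ay \ Ax = {ey})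
    (i : Sym2 V) (hiG : i ∈ G.edgeSet) (hix : i ∉ Ax) (hiy : i ∉ Ay)
    (Cx Cy Ce : Set (Sym2 V))
    (hCx : IsCycleSet (SimpleGraph.fromEdgeSet (Ax ∪ {i})) Cx)
    (hCy : IsCycleSet (SimpleGraph.fromEdgeSet (Ay ∪ {i})) Cy)
    (hCe : IsCycleSet (SimpleGraph.fromEdgeSet (Ax ∪ {ey})) Ce) :
    Cx = Cy ∨
      (ex ∈ Cx \ Cy ∧ ey ∈ Cy \ Cx ∧ i ∈ Cx ∩ Cy ∧
        (Cx \ Cy) ∪ (Cy \ Cx) = Ce ∧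
        Disjoint (Cx \ (Cx ∩ Cy)) (Cy \ (Cx ∩ Cy)) ∧
        (Cx \ (Cx ∩ Cy)) ∪ (Cy \ (Cx ∩ Cy)) = Ce ∧
        ex ∈ Ce) := by
  classical
  obtain ⟨hAxG, -, hAxAc⟩ := hAx
  obtain ⟨hAyG, -, hAyAc⟩ := hAy
  have hexm : ex ∈ Ax \ Ay := by rw [hex]; rfl
  have heym : ey ∈ Ay \ Ax := by rw [hey]; rfl
  have hAxsub : Ax ⊆ Ay ∪ {ex} := by
    intro e he
    by_cases h : e ∈ Ay
    · exact Or.inl h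
    · exact Or.inr (hex ▸ Set.mem_diff_of_mem he h : e ∈ ({ex} : Set (Sym2 V)))
  have hAysub : Ay ⊆ Ax ∪ {ey} := by
    intro e he
    by_cases h : e ∈ Ax
    · exact Or.inl h
    · exact Or.inr (hey ▸ Set.mem_diff_of_mem he h : e ∈ ({ey} : Set (Sym2 V)))
  obtain ⟨hCxne, hCxd, hCxev, hCxsub'⟩ := aux_isCycleSet_props hCx
  obtain ⟨hCyne, hCyd, hCyev, hCysub'⟩ := aux_isCycleSet_props hCy
  obtain ⟨hCene, hCed, hCeev, hCesub'⟩ := aux_isCycleSet_props hCe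
  rw [edgeSet_fromEdgeSet] at hCxsub' hCysub' hCesub'
  have hCxsub : Cx ⊆ Ax ∪ {i} := fun e he => (hCxsub' he).1
  have hCysub : Cy ⊆ Ay ∪ {i} := fun e he => (hCysub' he).1
  have hCesub : Ce ⊆ Ax ∪ {ey} := fun e he => (hCesub' he).1
  -- each fundamental cycle contains its inserted edge
  have hins : ∀ {A : Set (Sym2 V)} {j : Sym2 V} {C : Set (Sym2 V)},
      (fromEdgeSet A).IsAcyclic → C.Nonempty → (∀ e ∈ C, ¬ e.IsDiag) →
      (∀ x : V, Even {e | e ∈ C ∧ x ∈ e}.ncard) → C ⊆ A ∪ {j} → j ∈ C := by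
    intro A j C hA hne hd hev hs
    by_contra hjC
    have hCA : C ⊆ A := by
      intro e he
      rcases hs he with h' | h'
      · exact h'
      · exact absurd he (Set.mem_singleton_iff.1 h' ▸ hjC)
    exact hne.ne_empty (aux_even_subset_acyclic_empty hA hCA hd hev)
  have hiCx : i ∈ Cx := hins hAxAc hCxne hCxd hCxev hCxsub
  have hiCy : i ∈ Cy := hins hAyAc hCyne hCyd hCyev hCysub
  by_cases hx : ex ∈ Cx
  · by_cases hy : ey ∈ Cy
    · -- main case
      right
      have hexCy : ex ∉ Cy := by
        intro hc
        rcases hCysub hc with h' | h'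
        · exact hexm.2 h'
        · exact hix (Set.mem_singleton_iff.1 h' ▸ hexm.1)
      have heyCx : ey ∉ Cx := by
        intro hc
        rcases hCxsub hc with h' | h'
        · exact heym.2 h'
        · exact hiy (Set.mem_singleton_iff.1 h' ▸ heym.1)
      set D : Set (Sym2 V) := (Cx \ Cy) ∪ (Cy \ Cx) with hDdef
      have hDsub : D ⊆ Ax ∪ {ey} := by
        rintro e (⟨he1, he2⟩ | ⟨he2, he1⟩)
        · rcases hCxsub he1 with h' | h'
          · exact Or.inl h'
          · exact absurd (Set.mem_singleton_iff.1 h' ▸ hiCy) he2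
        · rcases hCysub he2 with h' | h'
          · exact hAysub h'
          · exact absurd (Set.mem_singleton_iff.1 h' ▸ hiCx) he1
      have hDne : D.Nonempty := ⟨ex, Or.inl ⟨hx, hexCy⟩⟩
      have hDd : ∀ e ∈ D, ¬ e.IsDiag := by
        rintro e (⟨he, -⟩ | ⟨he, -⟩)
        · exact hCxd e he
        · exact hCyd e he
      have hDev := aux_even_deg_symmdiff hCxev hCyev
      have hDCe : D = Ce :=
        aux_cycle_unique hAxAc hDne hDd hDev hDsub hCene hCed hCeev hCesub
      have hrw1 : Cx \ (Cx ∩ Cy) = Cx \ Cy := Set.diff_self_inter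
      have hrw2 : Cy \ (Cx ∩ Cy) = Cy \ Cx := by rw [Set.inter_comm]; exact Set.diff_self_inter
      refine ⟨⟨hx, hexCy⟩, ⟨hy, heyCx⟩, ⟨hiCx, hiCy⟩, hDCe, ?_, ?_, ?_⟩
      · rw [hrw1, hrw2]; exact disjoint_sdiff_sdiff
      · rw [hrw1, hrw2]; exact hDCe
      · exact hDCe ▸ (Or.inl ⟨hx, hexCy⟩ : ex ∈ D)
    · -- ey ∉ Cy : Cy is a cycle set inside Ax ∪ {i}
      left
      have hCysub2 : Cy ⊆ Ax ∪ {i} := by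
        intro e he
        rcases hCysub he with h' | h'
        · rcases hAysub h' with h'' | h''
          · exact Or.inl h''
          · exact absurd (Set.mem_singleton_iff.1 h'' ▸ he) hy
        · exact Or.inr h'
      exact aux_cycle_unique hAxAc hCxne hCxd hCxev hCxsub hCyne hCyd hCyev hCysub2
  · -- ex ∉ Cx : Cx is a cycle set inside Ay ∪ {i}
    left
    have hCxsub2 : Cx ⊆ Ay ∪ {i} := by
      intro e he
      rcases hCxsub he with h' | h'
      · rcases hAxsub h' with h'' | h''
        · exact Or.inl h''
        · exact absurd (Set.mem_singleton_iff.1 h'' ▸ he) hx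
      · exact Or.inr h'
    exact aux_cycle_unique hAyAc hCxne hCxd hCxev hCxsub2 hCyne hCyd hCyev hCysub
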